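/- arXiv:2402.17616 — 2 statements merged into one kernel-verified Lean document; each statement's English description precedes it below -/
import Mathlib

section
/- Let D be an m×n matrix with nonnegative integer entries such that every column of D is nonzero. Suppose there exist a nonnegative integer n×n matrix C and indices i₁,…,iₙ ∈ {1,…,m} such that the n×n matrix whose (r,s)-entry is (DC)_{i_r, s} is lower unitriangular (1's on the diagonal, 0's above the diagonal). Then there is a permutation σ of the columns of D such that the n×n submatrix of D with rows i₁,…,iₙ and columns σ(1),…,σ(n) is lower unitriangular. -/
private lemma sum_eq_one_exists {K : Type*} [Fintype K] (g : K → ℕ)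
    (h : ∑ k, g k = 1) : ∃ k, g k = 1 := by
  have hne : ∑ k, g k ≠ 0 := by omega
  obtain ⟨k, -, hk⟩ := Finset.exists_ne_zero_of_sum_ne_zero hne
  refine ⟨k, le_antisymm ?_ (Nat.one_le_iff_ne_zero.mpr hk)⟩
  calc g k ≤ ∑ k, g k := Finset.single_le_sum (fun _ _ => Nat.zero_le _) (Finset.mem_univ k)
    _ = 1 := h

private lemma geck_key : ∀ (p : ℕ) (K : Type) [Fintype K] [DecidableEq K]
    (A : Fin p → K → ℕ) (C : K → Fin p → ℕ),
    (∀ r s : Fin p, (r = s → ∑ k, A r k * C k s = 1) ∧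
      (r < s → ∑ k, A r k * C k s = 0)) →
    ∃ f : Fin p → K, Function.Injective f ∧ ∀ r s : Fin p,
      (r = s → A r (f s) = 1) ∧ (r < s → A r (f s) = 0) := by
  intro p
  induction p with
  | zero =>
    intro K _ _ A C _
    exact ⟨Fin.elim0, fun r => r.elim0, fun r => r.elim0⟩
  | succ p ih =>
    intro K _ _ A C h
    obtain ⟨k₀, hk₀⟩ : ∃ k, A 0 k * C k 0 = 1 := sum_eq_one_exists _ ((h 0 0).1 rfl)
    have hA0 : A 0 k₀ = 1 := by
      have h1 : A 0 k₀ ≤ 1 := Nat.le_of_dvd one_pos ⟨_, hk₀.symm⟩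
      have h2 : A 0 k₀ ≠ 0 := by
        intro h0
        rw [h0, Nat.zero_mul] at hk₀
        exact absurd hk₀ zero_ne_one
      omega
    have hCzero : ∀ (k : K) (s : Fin p), A 0 k ≠ 0 → C k s.succ = 0 := by
      intro k s hk
      have h0 := (h 0 s.succ).2 (Fin.succ_pos s)
      have := (Finset.sum_eq_zero_iff.mp h0) k (Finset.mem_univ k)
      rcases Nat.mul_eq_zero.mp this with h' | h'
      · exact absurd h' hk
      · exact h'
    have hsum : ∀ (r s : Fin p),
        ∑ k : {k : K // A 0 k = 0}, A r.succ k.1 * C k.1 s.succ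
          = ∑ k : K, A r.succ k * C k s.succ := by
      intro r s
      have h1 : ∑ k ∈ Finset.univ.filter (fun k => A 0 k = 0),
          A r.succ k * C k s.succ
          = ∑ k : {k : K // A 0 k = 0}, A r.succ k.1 * C k.1 s.succ :=
        Finset.sum_subtype _ (by simp) _
      rw [← h1]
      refine Finset.sum_filter_of_ne ?_
      intro k _ hk
      by_contra hk0
      rw [hCzero k s hk0, Nat.mul_zero] at hk
      exact hk rfl
    have hyp' : ∀ r s : Fin p,
        (r = s → ∑ k : {k : K // A 0 k = 0},
          A r.succ k.1 * C k.1 s.succ = 1) ∧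
        (r < s → ∑ k : {k : K // A 0 k = 0},
          A r.succ k.1 * C k.1 s.succ = 0) := by
      intro r s
      constructor
      · rintro rfl
        rw [hsum]
        exact (h r.succ r.succ).1 rfl
      · intro hrs
        rw [hsum]
        exact (h r.succ s.succ).2 (Fin.succ_lt_succ_iff.mpr hrs)
    obtain ⟨f', hf'inj, hf'⟩ := ih {k : K // A 0 k = 0}
      (fun r k => A r.succ k.1) (fun k s => C k.1 s.succ) hyp'
    refine ⟨Fin.cases k₀ (fun r => (f' r).1), ?_, ?_⟩
    · intro a b hab
      induction a using Fin.cases with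
      | zero =>
        induction b using Fin.cases with
        | zero => rfl
        | succ j =>
          simp only [Fin.cases_zero, Fin.cases_succ] at hab
          exact absurd ((f' j).2 ▸ hab ▸ hA0) zero_ne_one
      | succ i =>
        induction b using Fin.cases with
        | zero =>
          simp only [Fin.cases_zero, Fin.cases_succ] at hab
          exact absurd ((f' i).2 ▸ hab.symm ▸ hA0) zero_ne_one
        | succ j =>
          simp only [Fin.cases_succ] at hab
          exact congrArg Fin.succ (hf'inj (Subtype.val_injective hab))
    · intro r s
      induction r using Fin.cases with
      | zero =>
        induction s using Fin.cases with
        | zero => exact ⟨fun _ => by simpa using hA0, fun hlt => absurd hlt (lt_irrefl _)⟩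
        | succ j =>
          refine ⟨fun heq => absurd heq.symm (Fin.succ_ne_zero j), fun _ => ?_⟩
          simpa using (f' j).2
      | succ i =>
        induction s using Fin.cases with
        | zero =>
          exact ⟨fun heq => absurd heq (Fin.succ_ne_zero i),
            fun hlt => absurd hlt (Fin.not_lt_zero _)⟩
        | succ j =>
          constructor
          · intro heq
            have : i = j := Fin.succ_injective _ heq
            simpa using (hf' i j).1 this
          · intro hlt
            have : i < j := Fin.succ_lt_succ_iff.mp hlt
            simpa using (hf' i j).2 this

/-- **Geck's criterion, abstract form.**
Let `D` be an `m × n` matrix with nonnegative integer entries whose columns are all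
nonzero.  If there are a nonnegative integer `n × n` matrix `C` and row indices
`idx : Fin n → Fin m` such that the matrix `(r, s) ↦ (D * C) (idx r) s` is lower
unitriangular, then some permutation `σ` of the columns makes the submatrix of `D`
with rows `idx` and columns `σ` lower unitriangular. -/
theorem stmt_1 (m n : ℕ) (D : Matrix (Fin m) (Fin n) ℕ)
    (hcol : ∀ s : Fin n, ∃ r : Fin m, D r s ≠ 0)
    (C : Matrix (Fin n) (Fin n) ℕ) (idx : Fin n → Fin m)
    (htri : ∀ r s : Fin n,
      (r = s → (D * C) (idx r) s = 1) ∧ (r < s → (D * C) (idx r) s = 0)) :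
    ∃ σ : Equiv.Perm (Fin n), ∀ r s : Fin n,
      (r = s → D (idx r) (σ s) = 1) ∧ (r < s → D (idx r) (σ s) = 0) := by
  have hyp : ∀ r s : Fin n,
      (r = s → ∑ k, D (idx r) k * C k s = 1) ∧
      (r < s → ∑ k, D (idx r) k * C k s = 0) := by
    intro r s
    simpa [Matrix.mul_apply] using htri r s
  obtain ⟨f, hfinj, hf⟩ := geck_key n (Fin n) (fun r k => D (idx r) k) C hyp
  exact ⟨Equiv.ofBijective f (Finite.injective_iff_bijective.mp hfinj),
    fun r s => hf r s⟩
end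

section
/- Let G be a finite group, T ≤ H ≤ G subgroups with T ≤ H, and s an element of T such that H = C_G(s). Set W = N_G(T)/T, W^H = N_H(T)/T, M = {m ∈ G : m⁻¹ s m ∈ T}, and Γ = H\M/T (double cosets). Assume that any two G-conjugates of T that are both contained in H are conjugate by an element of H. Then the map W^H w ↦ H ẇ T (where ẇ ∈ N_G(T) is any representative of w) is a well-defined bijection from the coset space W^H\W onto Γ. -/
/-- Let `G` be a finite group, `T ≤ H ≤ G` with `T` abelian (a "torus"),
`s ∈ T` and `H = C_G(s)`.  Set `W = N_G(T)/T`, `W^H = N_H(T)/T`,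
`M = {m ∈ G : m⁻¹ s m ∈ T}` and `Γ = H\M/T`.  Assume any two `G`-conjugates of
`T` contained in `H` are `H`-conjugate.  Then the map `W^H w ↦ H ẇ T` is a
well-defined bijection from `W^H \ W` onto `Γ`; unpacked, on representatives
`n ∈ N_G(T)` it respects the equivalence relations in both directions and every
class of `Γ` contains an element of `N_G(T)`. -/
theorem stmt_14 (G : Type) [Group G] [Finite G] (T H : Subgroup G)
    (hTH : T ≤ H)
    (hTab : ∀ x ∈ T, ∀ y ∈ T, x * y = y * x)
    (s : G) (hsT : s ∈ T) (hH : H = Subgroup.centralizer ({s} : Set G))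
    (hconj : ∀ g₁ g₂ : G,
      Subgroup.map (MulAut.conj g₁).toMonoidHom T ≤ H →
      Subgroup.map (MulAut.conj g₂).toMonoidHom T ≤ H →
      ∃ h ∈ H, Subgroup.map (MulAut.conj (h * g₁)).toMonoidHom T =
        Subgroup.map (MulAut.conj g₂).toMonoidHom T) :
    -- well-defined: equal cosets in `W^H \ W` map to the same double coset
    (∀ n n' : G, n ∈ Subgroup.normalizer (T : Set G) → n' ∈ Subgroup.normalizer (T : Set G) →
      (∃ h ∈ H ⊓ Subgroup.normalizer (T : Set G), n' = h * n) →
      ∃ h ∈ H, ∃ t ∈ T, n' = h * n * t) ∧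
    -- injective
    (∀ n n' : G, n ∈ Subgroup.normalizer (T : Set G) → n' ∈ Subgroup.normalizer (T : Set G) →
      (∃ h ∈ H, ∃ t ∈ T, n' = h * n * t) →
      ∃ h ∈ H ⊓ Subgroup.normalizer (T : Set G), n' = h * n) ∧
    -- surjective
    (∀ m : G, m⁻¹ * s * m ∈ T →
      ∃ n ∈ Subgroup.normalizer (T : Set G), ∃ h ∈ H, ∃ t ∈ T, m = h * n * t) := by
  refine ⟨?_, ?_, ?_⟩
  · rintro n n' hn hn' ⟨h, hh, rfl⟩
    exact ⟨h, hh.1, 1, one_mem _, by group⟩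
  · rintro n n' hn hn' ⟨h, hh, t, ht, rfl⟩
    refine ⟨h * (n * t * n⁻¹), ⟨H.mul_mem hh (hTH ((Subgroup.mem_normalizer_iff.mp hn t).mp ht)), ?_⟩, by group⟩
    have : h * (n * t * n⁻¹) = (h * n * t) * n⁻¹ := by group
    rw [this]
    exact Subgroup.mul_mem _ hn' (Subgroup.inv_mem _ hn)
  · intro m hm
    have hmap : Subgroup.map (MulAut.conj m).toMonoidHom T ≤ H := by
      intro y hy
      rw [Subgroup.mem_map] at hy
      obtain ⟨x, hx, rfl⟩ := hy
      rw [hH, Subgroup.mem_centralizer_iff]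
      intro z hz
      simp only [Set.mem_singleton_iff] at hz
      rw [hz]
      simp only [MulAut.conj_apply, MulEquiv.coe_toMonoidHom]
      have hs : s = m * (m⁻¹ * s * m) * m⁻¹ := by group
      have := hTab x hx (m⁻¹ * s * m) hm
      have key : _ := calc m * x * m⁻¹ * (m * (m⁻¹ * s * m) * m⁻¹)
          = m * (x * (m⁻¹ * s * m)) * m⁻¹ := by group
        _ = m * ((m⁻¹ * s * m) * x) * m⁻¹ := by rw [this]
        _ = m * (m⁻¹ * s * m) * m⁻¹ * (m * x * m⁻¹) := by group
      rw [hs]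
      exact key.symm
    have hone : (MulAut.conj (1 : G)).toMonoidHom = MonoidHom.id G := by
      ext x; simp
    have hid : Subgroup.map (MulAut.conj (1 : G)).toMonoidHom T ≤ H := by
      rw [hone, Subgroup.map_id]; exact hTH
    obtain ⟨h, hh, heq⟩ := hconj m 1 hmap hid
    have hmapT : Subgroup.map (MulAut.conj (h * m)).toMonoidHom T = T := by
      rw [heq, hone, Subgroup.map_id]
    have hnorm : h * m ∈ Subgroup.normalizer (T : Set G) := by
      rw [Subgroup.mem_normalizer_iff]
      intro g
      constructor
      · intro hg
        rw [← hmapT]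
        exact ⟨g, hg, rfl⟩
      · intro hg
        have : (h * m) * g * (h * m)⁻¹ ∈ Subgroup.map (MulAut.conj (h * m)).toMonoidHom T := by
          rw [hmapT]; exact hg
        obtain ⟨x, hx, hx2⟩ := this
        simp only [MulAut.conj_apply, MulEquiv.coe_toMonoidHom] at hx2
        have : x = g := by
          have := mul_left_cancel (a := h * m) (by
            have := congrArg (· * (h * m)) hx2
            simpa [mul_assoc] using this)
          exact this
        rwa [← this]
    exact ⟨h * m, hnorm, h⁻¹, H.inv_mem hh, 1, one_mem _, by group⟩
end
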